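/- As formal power series over ℚ, 49x·(x^7;x^7)_∞^7/(x;x)_∞^8 = 49·∑_{n≥1} B_{n−1}(1!·e_1, …, (n−1)!·e_{n−1}) x^n/(n−1)!, where B_k denotes the k-th complete exponential Bell polynomial and for n = 7^m·n' with m ≥ 0 and 7 ∤ n', e_n = (σ(n)/n)·(1 + 42/(7^{m+1} − 1)). -/

import Mathlib

noncomputable section

/-- `sigma' n` is the sum of all positive divisors of `n` (including `1` and `n`). -/
def sigma' (n : ℕ) : ℕ := ∑ d ∈ n.divisors, d

/-- The q-Pochhammer symbol `(x^r; x^r)_∞ = ∏_{k≥1} (1 − x^{r·k})` as a formal power series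
over `ℚ`.  The factor for index `k` only affects coefficients of degree `≥ r·k`, so the `n`-th
coefficient of the infinite product equals that of the finite product over `k = 1, …, n+1`. -/
def pochhammerPS (r : ℕ) : PowerSeries ℚ :=
  PowerSeries.mk fun n =>
    PowerSeries.coeff n
      (∏ k ∈ Finset.range (n + 1), (1 - (PowerSeries.X : PowerSeries ℚ) ^ (r * (k + 1))))

/-- The formal logarithm of a power series with constant coefficient `1`:
`log f = −∑_{k≥1} (1 − f)^k / k`.  Since `1 − f` has zero constant term, `(1 − f)^k` does not
contribute to the `n`-th coefficient when `k > n` (and the `k = 0` term vanishes since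
division by zero is zero). -/
def logPS (f : PowerSeries ℚ) : PowerSeries ℚ :=
  PowerSeries.mk fun n =>
    - ∑ k ∈ Finset.range (n + 1), PowerSeries.coeff n ((1 - f) ^ k) / (k : ℚ)

/-- The formal exponential of a power series with constant coefficient `0`:
`exp f = ∑_{k≥0} f^k / k!`.  Since `f` has zero constant term, `f^k` does not contribute to
the `n`-th coefficient when `k > n`. -/
def expPS (f : PowerSeries ℚ) : PowerSeries ℚ :=
  PowerSeries.mk fun n =>
    ∑ k ∈ Finset.range (n + 1), PowerSeries.coeff n (f ^ k) / (Nat.factorial k : ℚ)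

/-- The `n`-th complete exponential Bell polynomial evaluated at `(x_1, x_2, …)`, defined via
the generating identity `exp(∑_{m≥1} x_m t^m/m!) = ∑_{n≥0} B_n(x_1, …, x_n) t^n/n!`
(with `B_0 = 1`): `B_n(x_1, …, x_n)` is `n!` times the `n`-th coefficient of the left side. -/
def bellComplete (x : ℕ → ℚ) (n : ℕ) : ℚ :=
  (Nat.factorial n : ℚ) *
    PowerSeries.coeff n
      (expPS (PowerSeries.mk fun m => if m = 0 then 0 else x m / (Nat.factorial m : ℚ)))

namespace Stmt11Aux

open PowerSeries Finset


lemma coeff_derivativeFun' (f : PowerSeries ℚ) (n : ℕ) :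
    PowerSeries.coeff n (derivativeFun f) = PowerSeries.coeff (n + 1) f * (n + 1) :=
  coeff_derivative f n

def Hs (c : ℕ) : PowerSeries ℚ := PowerSeries.mk fun i => if c ∣ (i+1) then -(c:ℚ) else 0

lemma Hs_mul (c : ℕ) (hc : 1 ≤ c) :
    Hs c * (1 - X ^ c) = derivativeFun (1 - X ^ c) := by
  ext n
  rw [coeff_derivativeFun', mul_sub, mul_one, map_sub, map_sub, coeff_mul_X_pow']
  simp only [Hs, coeff_mk, map_sub, PowerSeries.coeff_one, coeff_X_pow]
  by_cases hle : c ≤ n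
  · have hiff : (c ∣ n - c + 1) ↔ (c ∣ n + 1) := by
      have h1 : n + 1 = n - c + 1 + c := by omega
      rw [h1, Nat.dvd_add_self_right]
    have hne : ¬ (c = n + 1) := by omega
    by_cases hd : c ∣ n + 1
    · rw [if_pos hd, if_pos hle, if_pos (hiff.mpr hd), if_neg (by omega : ¬ n+1 = 0),
        if_neg (fun h => hne h.symm)]
      ring
    · rw [if_neg hd, if_pos hle, if_neg (fun h => hd (hiff.mp h)), if_neg (by omega : ¬ n+1 = 0),
        if_neg (fun h => hne h.symm)]
      ring
  · by_cases heq : c = n + 1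
    · rw [if_pos (heq ▸ dvd_refl c), if_neg hle, if_pos heq.symm, if_neg (by omega : ¬ n+1 = 0)]
      push_cast [heq]
      ring
    · have hd : ¬ c ∣ n + 1 := by
        intro h
        have := Nat.le_of_dvd (by omega) h
        omega
      rw [if_neg hd, if_neg hle, if_neg (show ¬ (n + 1 = c) from fun h => heq h.symm),
        if_neg (show ¬ (n + 1 = 0) by omega)]
      ring

/-- truncated product -/
def Q (r N : ℕ) : PowerSeries ℚ := ∏ k ∈ Finset.range N, (1 - (X : PowerSeries ℚ) ^ (r * (k + 1)))

lemma derivQ (r : ℕ) (hr : 1 ≤ r) (N : ℕ) :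
    derivativeFun (Q r N) = (∑ k ∈ Finset.range N, Hs (r * (k+1))) * Q r N := by
  induction N with
  | zero => simp [Q, derivativeFun_one]
  | succ N ih =>
    rw [Q, Finset.prod_range_succ, Finset.sum_range_succ, ← Q, derivativeFun_mul]
    rw [smul_eq_mul, smul_eq_mul, ih, ← Hs_mul _ (by nlinarith)]
    ring

lemma X_pow_dvd_Q_sub (r : ℕ) (hr : 1 ≤ r) (N M : ℕ) (h : N ≤ M) :
    (X : PowerSeries ℚ) ^ N ∣ Q r M - Q r N := by
  induction M, h using Nat.le_induction with
  | base => simp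
  | succ M hNM ih =>
    have h1 : Q r (M+1) - Q r N = (Q r M - Q r N) * (1 - X ^ (r * (M+1)))
        + Q r N * (0 - X ^ (r * (M+1))) := by
      rw [Q, Finset.prod_range_succ, ← Q]; ring
    rw [h1]
    apply dvd_add
    · exact Dvd.dvd.mul_right ih _
    · apply Dvd.dvd.mul_left
      rw [zero_sub, dvd_neg]
      exact pow_dvd_pow X (by nlinarith)

lemma coeff_Q_stable (r : ℕ) (hr : 1 ≤ r) {b N M : ℕ} (hb : b < N) (h : N ≤ M) :
    PowerSeries.coeff b (Q r M) = PowerSeries.coeff b (Q r N) := by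
  have := X_pow_dvd_Q_sub r hr N M h
  rw [X_pow_dvd_iff] at this
  have h2 := this b hb
  rw [map_sub] at h2
  linarith

lemma coeff_pochhammer (r : ℕ) (hr : 1 ≤ r) {b N : ℕ} (hb : b < N) :
    PowerSeries.coeff b (Q r N) = PowerSeries.coeff b (pochhammerPS r) := by
  rcases le_or_gt N (b+1) with h | h
  · rw [pochhammerPS, coeff_mk, ← Q, coeff_Q_stable r hr (by omega : b < N) (by omega : N ≤ b+1)]
  · rw [pochhammerPS, coeff_mk, ← Q, coeff_Q_stable r hr (by omega : b < b+1) (le_of_lt h)]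

lemma constantCoeff_pochhammer (r : ℕ) (hr : 1 ≤ r) :
    PowerSeries.coeff 0 (pochhammerPS r) = 1 := by
  rw [← coeff_pochhammer r hr (by omega : 0 < 1)]
  simp only [Q, Finset.range_one, Finset.prod_singleton, map_sub, PowerSeries.coeff_one,
    coeff_X_pow]
  rw [if_pos trivial, if_neg (show ¬ ((0:ℕ) = r * (0+1)) by intro h; simp at h; omega), sub_zero]

/-- the log-derivative series of pochhammerPS r -/
def G (r : ℕ) : PowerSeries ℚ :=
  PowerSeries.mk fun a => PowerSeries.coeff a (∑ k ∈ Finset.range (a+1), Hs (r * (k+1)))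

lemma coeff_G_stable (r : ℕ) (hr : 1 ≤ r) {a N : ℕ} (ha : a < N) :
    PowerSeries.coeff a (∑ k ∈ Finset.range N, Hs (r * (k+1)))
      = PowerSeries.coeff a (G r) := by
  rw [G, coeff_mk]
  rw [map_sum, map_sum]
  apply (Finset.sum_subset (Finset.range_subset_range.mpr (by omega : a + 1 ≤ N)) _).symm
  intro k hk hk2
  simp only [Finset.mem_range] at hk hk2
  simp only [Hs, coeff_mk]
  rw [if_neg]
  intro hdvd
  have := Nat.le_of_dvd (by omega) hdvd
  nlinarith

lemma mul_coeff_congr {A A' B : PowerSeries ℚ} {n : ℕ}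
    (h : ∀ j ≤ n, PowerSeries.coeff j A = PowerSeries.coeff j A') :
    PowerSeries.coeff n (B * A) = PowerSeries.coeff n (B * A') := by
  rw [PowerSeries.coeff_mul, PowerSeries.coeff_mul]
  apply Finset.sum_congr rfl
  intro p hp
  rw [Finset.HasAntidiagonal.mem_antidiagonal] at hp
  rw [h p.2 (by omega)]

lemma deriv_pochhammer (r : ℕ) (hr : 1 ≤ r) :
    derivativeFun (pochhammerPS r) = G r * pochhammerPS r := by
  ext n
  rw [coeff_derivativeFun', ← coeff_pochhammer r hr (by omega : n + 1 < n + 2),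
    ← coeff_derivativeFun', derivQ r hr (n+2)]
  rw [PowerSeries.coeff_mul, PowerSeries.coeff_mul]
  apply Finset.sum_congr rfl
  intro p hp
  rw [Finset.HasAntidiagonal.mem_antidiagonal] at hp
  rw [coeff_G_stable r hr (by omega : p.1 < n + 2),
    coeff_pochhammer r hr (by omega : p.2 < n + 2)]


/-! ### exponential -/

def Sexp (f : PowerSeries ℚ) (N : ℕ) : PowerSeries ℚ :=
  ∑ k ∈ Finset.range N, (Nat.factorial k : ℚ)⁻¹ • f ^ k

lemma coeff_pow_eq_zero {f : PowerSeries ℚ} (hf : PowerSeries.constantCoeff f = 0)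
    {j k : ℕ} (hjk : j < k) : PowerSeries.coeff j (f ^ k) = 0 := by
  have h : (X : PowerSeries ℚ) ^ k ∣ f ^ k :=
    pow_dvd_pow_of_dvd (PowerSeries.X_dvd_iff.mpr hf) k
  exact PowerSeries.X_pow_dvd_iff.mp h j hjk

lemma coeff_expPS_eq {f : PowerSeries ℚ} (hf : PowerSeries.constantCoeff f = 0)
    {j N : ℕ} (hj : j < N) :
    PowerSeries.coeff j (expPS f) = PowerSeries.coeff j (Sexp f N) := by
  rw [expPS, coeff_mk, Sexp, map_sum]
  have : ∀ k ∈ Finset.range N, PowerSeries.coeff j ((Nat.factorial k : ℚ)⁻¹ • f ^ k)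
      = PowerSeries.coeff j (f ^ k) / (Nat.factorial k : ℚ) := by
    intro k _
    rw [map_smul, smul_eq_mul, div_eq_mul_inv, mul_comm]
  rw [Finset.sum_congr rfl this]
  apply Finset.sum_subset (Finset.range_subset_range.mpr (by omega : j + 1 ≤ N))
  intro k hk hk2
  simp only [Finset.mem_range] at hk hk2
  rw [coeff_pow_eq_zero hf (by omega : j < k), zero_div]

lemma derivativeFun_pow (f : PowerSeries ℚ) (k : ℕ) :
    derivativeFun (f ^ (k+1)) = PowerSeries.C ((k : ℚ) + 1) * (f ^ k * derivativeFun f) := by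
  induction k with
  | zero => simp
  | succ k ih =>
    rw [pow_succ, derivativeFun_mul, smul_eq_mul, smul_eq_mul, ih]
    have hC : PowerSeries.C ((k : ℚ) + 1 + 1) = PowerSeries.C ((k : ℚ) + 1) + 1 := by
      rw [map_add, map_one]
    push_cast
    rw [hC]
    ring

lemma derivativeFun_sum {ι : Type} (s : Finset ι) (g : ι → PowerSeries ℚ) :
    derivativeFun (∑ i ∈ s, g i) = ∑ i ∈ s, derivativeFun (g i) :=
  map_sum (PowerSeries.derivative ℚ) g s

lemma derivativeFun_Sexp (f : PowerSeries ℚ) (N : ℕ) :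
    derivativeFun (Sexp f (N+1)) = derivativeFun f * Sexp f N := by
  rw [Sexp, derivativeFun_sum, Finset.sum_range_succ']
  have h0 : derivativeFun ((Nat.factorial 0 : ℚ)⁻¹ • f ^ 0) = 0 := by
    simp [derivativeFun_smul, derivativeFun_one]
  rw [h0, add_zero, Sexp, Finset.mul_sum]
  apply Finset.sum_congr rfl
  intro k _
  rw [derivativeFun_smul, derivativeFun_pow, smul_eq_C_mul, smul_eq_C_mul]
  have h1 : ((Nat.factorial (k+1) : ℚ))⁻¹ * ((k : ℚ) + 1) = ((Nat.factorial k : ℚ))⁻¹ := by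
    rw [Nat.factorial_succ]
    push_cast
    rw [mul_inv]
    field_simp
  calc PowerSeries.C (((k+1).factorial : ℚ))⁻¹ * (PowerSeries.C ((k : ℚ) + 1) * (f ^ k * derivativeFun f))
      = PowerSeries.C ((((k+1).factorial : ℚ))⁻¹ * ((k : ℚ) + 1)) * (f ^ k * derivativeFun f) := by
        rw [map_mul]; ring
    _ = derivativeFun f * (PowerSeries.C ((Nat.factorial k : ℚ))⁻¹ * f ^ k) := by rw [h1]; ring

lemma deriv_expPS {f : PowerSeries ℚ} (hf : PowerSeries.constantCoeff f = 0) :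
    derivativeFun (expPS f) = derivativeFun f * expPS f := by
  ext n
  rw [coeff_derivativeFun', coeff_expPS_eq hf (by omega : n + 1 < n + 2),
    ← coeff_derivativeFun', derivativeFun_Sexp]
  exact mul_coeff_congr (fun j hj => (coeff_expPS_eq hf (by omega : j < n + 1)).symm)

lemma constantCoeff_expPS {f : PowerSeries ℚ} :
    PowerSeries.coeff 0 (expPS f) = 1 := by
  rw [expPS, coeff_mk]
  simp


lemma ode_unique {F G : PowerSeries ℚ}
    (h0F : PowerSeries.coeff 0 F = 1) (h0G : PowerSeries.coeff 0 G = 1)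
    (hd : F * derivativeFun G = G * derivativeFun F) : F = G := by
  ext n
  induction n using Nat.strong_induction_on with
  | _ n ih =>
    match n with
    | 0 => rw [h0F, h0G]
    | (k+1) =>
      have hk := congrArg (PowerSeries.coeff k) hd
      rw [PowerSeries.coeff_mul, PowerSeries.coeff_mul,
        Finset.Nat.sum_antidiagonal_eq_sum_range_succ_mk,
        Finset.Nat.sum_antidiagonal_eq_sum_range_succ_mk,
        Finset.sum_range_succ', Finset.sum_range_succ'] at hk
      simp only [coeff_derivativeFun', Nat.sub_zero] at hk
      have hsum : ∀ i ∈ Finset.range k,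
          PowerSeries.coeff (i+1) F *
            (PowerSeries.coeff (k-(i+1)+1) G * ((k-(i+1) : ℕ) + 1 : ℚ))
          = PowerSeries.coeff (i+1) G *
            (PowerSeries.coeff (k-(i+1)+1) F * ((k-(i+1) : ℕ) + 1 : ℚ)) := by
        intro i hi
        rw [Finset.mem_range] at hi
        rw [ih (i+1) (by omega), ih (k-(i+1)+1) (by omega)]
      rw [Finset.sum_congr rfl hsum] at hk
      have h2 := add_left_cancel hk
      rw [h0F, h0G, one_mul, one_mul] at h2
      have hc : ((k : ℚ) + 1) ≠ 0 := by positivity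
      exact (mul_right_cancel₀ hc h2).symm


/-! ### arithmetic -/

lemma sum_if_divisors (n N : ℕ) (hn : 1 ≤ n) (hN : n ≤ N) (f : ℕ → ℚ) :
    ∑ k ∈ Finset.range N, (if (k+1) ∣ n then f (k+1) else 0) = ∑ d ∈ n.divisors, f d := by
  have h1 : ∑ k ∈ Finset.range N, (if (k+1) ∣ n then f (k+1) else 0)
      = ∑ k ∈ Finset.range n, (if (k+1) ∣ n then f (k+1) else 0) := by
    symm
    apply Finset.sum_subset (Finset.range_subset_range.mpr hN)
    intro k hk hk2
    simp only [Finset.mem_range] at hk hk2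
    rw [if_neg]
    intro hdvd
    have := Nat.le_of_dvd (by omega) hdvd
    omega
  rw [h1]
  rw [Nat.divisors, Finset.sum_filter]
  rw [Finset.sum_Ico_eq_sum_range]
  simp only [Nat.add_sub_cancel]
  apply Finset.sum_congr rfl
  intro k _
  rw [add_comm 1 k]

lemma coeff_G_one (a : ℕ) :
    PowerSeries.coeff a (G 1) = -(sigma' (a+1) : ℚ) := by
  rw [G, coeff_mk, map_sum]
  simp only [Hs, one_mul, coeff_mk]
  rw [sum_if_divisors (a+1) (a+1) (by omega) le_rfl (fun d => -(d:ℚ))]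
  rw [sigma']
  push_cast
  rw [← Finset.sum_neg_distrib]

lemma coeff_G_seven (a : ℕ) :
    PowerSeries.coeff a (G 7) =
      if 7 ∣ (a+1) then -7 * (sigma' ((a+1)/7) : ℚ) else 0 := by
  rw [G, coeff_mk, map_sum]
  simp only [Hs, coeff_mk]
  by_cases hd : 7 ∣ (a+1)
  · obtain ⟨b, hb⟩ := hd
    have hb1 : 1 ≤ b := by omega
    have hb2 : b ≤ a + 1 := by omega
    have hterm : ∀ k ∈ Finset.range (a+1),
        (if 7 * (k+1) ∣ a+1 then -((7 * (k+1) : ℕ) : ℚ) else 0)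
        = (if (k+1) ∣ b then -7 * ((k+1 : ℕ) : ℚ) else 0) := by
      intro k _
      have hiff : (7 * (k+1) ∣ a+1) ↔ ((k+1) ∣ b) := by
        rw [hb]
        exact Nat.mul_dvd_mul_iff_left (by omega : 0 < 7)
      rw [if_congr hiff rfl rfl]
      split_ifs with h
      · push_cast; ring
      · rfl
    rw [Finset.sum_congr rfl hterm,
      sum_if_divisors b (a+1) hb1 hb2 (fun d => -7 * (d : ℚ))]
    rw [if_pos ⟨b, hb⟩]
    have hq : (a+1)/7 = b := by omega
    rw [hq, sigma']
    push_cast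
    rw [Finset.mul_sum]
  · rw [if_neg hd]
    apply Finset.sum_eq_zero
    intro k _
    rw [if_neg]
    intro h
    exact hd (dvd_trans (Dvd.intro (k+1) rfl) h)

lemma key_e (e : ℕ → ℚ)
    (he : ∀ m n' : ℕ, ¬ 7 ∣ n' →
      e (7 ^ m * n') = ((sigma' (7 ^ m * n') : ℚ) / ((7 ^ m * n' : ℕ) : ℚ)) *
        (1 + 42 / (7 ^ (m + 1) - 1)))
    (n : ℕ) (hn : n ≠ 0) :
    (n : ℚ) * e n = 8 * (sigma' n : ℚ)
      - (if 7 ∣ n then 49 * (sigma' (n/7) : ℚ) else 0) := by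
  have h7 : Nat.Prime 7 := by norm_num
  set m := n.factorization 7 with hm
  set n' := n / 7 ^ m with hn'
  have hfac : 7 ^ m * n' = n := Nat.ordProj_mul_ordCompl_eq_self n 7
  have hnd : ¬ 7 ∣ n' := Nat.not_dvd_ordCompl h7 hn
  have he' := he m n' hnd
  rw [hfac] at he'
  have hcop : ∀ t : ℕ, Nat.Coprime (7 ^ t) n' :=
    fun t => Nat.Coprime.pow_left t ((Nat.Prime.coprime_iff_not_dvd h7).mpr hnd)
  have hσ : ∀ a b : ℕ, Nat.Coprime a b → sigma' (a * b) = sigma' a * sigma' b := by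
    intro a b hab
    have h1 : ∀ x : ℕ, sigma' x = ArithmeticFunction.sigma 1 x := by
      intro x; rw [ArithmeticFunction.sigma_one_apply, sigma']
    rw [h1, h1, h1]
    exact ArithmeticFunction.isMultiplicative_sigma.map_mul_of_coprime hab
  have hσpp : ∀ t : ℕ, (sigma' (7 ^ t) : ℚ) = ((7:ℚ) ^ (t+1) - 1) / 6 := by
    intro t
    have h1 : sigma' (7 ^ t) = ArithmeticFunction.sigma 1 (7 ^ t) := by
      rw [ArithmeticFunction.sigma_one_apply, sigma']
    rw [h1, ArithmeticFunction.sigma_one_apply_prime_pow h7]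
    push_cast
    rw [geom_sum_eq (by norm_num : (7:ℚ) ≠ 1)]
    norm_num
  have hnQ : ((n : ℚ)) ≠ 0 := Nat.cast_ne_zero.mpr hn
  rcases Nat.eq_zero_or_pos m with hm0 | hmpos
  · have h7n : ¬ 7 ∣ n := by
      rw [← hfac, hm0, pow_zero, one_mul]; exact hnd
    rw [if_neg h7n, he', hm0]
    norm_num
    field_simp
  · obtain ⟨t, ht⟩ : ∃ t, m = t + 1 := ⟨m - 1, by omega⟩
    have h7n : 7 ∣ n := by
      rw [← hfac, ht, pow_succ]
      exact ⟨7 ^ t * n', by ring⟩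
    rw [if_pos h7n]
    have hdiv : n / 7 = 7 ^ t * n' := by
      have h2 : n = 7 * (7 ^ t * n') := by rw [← hfac, ht]; ring
      rw [h2, Nat.mul_div_cancel_left _ (by omega : 0 < 7)]
    have hσn : (sigma' n : ℚ) = ((7:ℚ) ^ (m+1) - 1) / 6 * (sigma' n' : ℚ) := by
      rw [← hfac, hσ _ _ (hcop m)]
      push_cast
      rw [hσpp m]
    have hσn7 : (sigma' (n/7) : ℚ) = ((7:ℚ) ^ (t+1) - 1) / 6 * (sigma' n' : ℚ) := by
      rw [hdiv, hσ _ _ (hcop t)]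
      push_cast
      rw [hσpp t]
    have h1m : (1:ℚ) ≤ 7 ^ m := one_le_pow₀ (by norm_num)
    have hD : ((7:ℚ) ^ (m+1) - 1) ≠ 0 := by
      have : (7:ℚ) ^ (m+1) = 7 * 7 ^ m := by rw [pow_succ]; ring
      rw [this]
      nlinarith
    rw [he', hσn, hσn7, ht] at *
    rw [ht] at hD
    field_simp
    ring


def Ee (e : ℕ → ℚ) : PowerSeries ℚ := PowerSeries.mk fun n => if n = 0 then 0 else e n

lemma constantCoeff_Ee (e : ℕ → ℚ) : PowerSeries.constantCoeff (Ee e) = 0 := by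
  rw [← PowerSeries.coeff_zero_eq_constantCoeff_apply, Ee, coeff_mk, if_pos rfl]

lemma deriv_Ee (e : ℕ → ℚ)
    (he : ∀ m n' : ℕ, ¬ 7 ∣ n' →
      e (7 ^ m * n') = ((sigma' (7 ^ m * n') : ℚ) / ((7 ^ m * n' : ℕ) : ℚ)) *
        (1 + 42 / (7 ^ (m + 1) - 1))) :
    derivativeFun (Ee e) = PowerSeries.C 7 * G 7 - PowerSeries.C 8 * G 1 := by
  ext i
  rw [coeff_derivativeFun', Ee, coeff_mk, if_neg (by omega : ¬ (i + 1 = 0))]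
  rw [map_sub, PowerSeries.coeff_C_mul, PowerSeries.coeff_C_mul, coeff_G_seven, coeff_G_one]
  have hk := key_e e he (i+1) (by omega)
  push_cast at hk ⊢
  split_ifs at hk ⊢ with h
  · linarith
  · linarith

end Stmt11Aux

open PowerSeries Finset Stmt11Aux

/-- As formal power series over `ℚ`,
`49x·(x^7;x^7)_∞^7/(x;x)_∞^8 = 49·∑_{n≥1} B_{n−1}(1!·e_1, …, (n−1)!·e_{n−1}) x^n/(n−1)!`,
where `B_k` is the `k`-th complete exponential Bell polynomial and for `n = 7^m·n'` with
`m ≥ 0` and `7 ∤ n'`, `e_n = (σ(n)/n)·(1 + 42/(7^(m+1) − 1))`. -/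
theorem stmt11 (e : ℕ → ℚ)
    (he : ∀ m n' : ℕ, ¬ 7 ∣ n' →
      e (7 ^ m * n') = ((sigma' (7 ^ m * n') : ℚ) / ((7 ^ m * n' : ℕ) : ℚ)) *
        (1 + 42 / (7 ^ (m + 1) - 1))) :
    49 * PowerSeries.X * pochhammerPS 7 ^ 7 * (pochhammerPS 1 ^ 8)⁻¹ =
      49 * PowerSeries.mk (fun n => if n = 0 then 0 else
        bellComplete (fun m => (Nat.factorial m : ℚ) * e m) (n - 1) /
          (Nat.factorial (n - 1) : ℚ)) := by
  have hE0 : PowerSeries.constantCoeff (Ee e) = 0 := constantCoeff_Ee e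
  have hc7 : PowerSeries.constantCoeff (pochhammerPS 7) = 1 := by
    have h := constantCoeff_pochhammer 7 (by omega)
    rwa [PowerSeries.coeff_zero_eq_constantCoeff_apply] at h
  have hc1 : PowerSeries.constantCoeff (pochhammerPS 1) = 1 := by
    have h := constantCoeff_pochhammer 1 (by omega)
    rwa [PowerSeries.coeff_zero_eq_constantCoeff_apply] at h
  have hmain : pochhammerPS 7 ^ 7 = expPS (Ee e) * pochhammerPS 1 ^ 8 := by
    apply ode_unique
    · rw [PowerSeries.coeff_zero_eq_constantCoeff_apply, map_pow, hc7, one_pow]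
    · rw [PowerSeries.coeff_zero_eq_constantCoeff_apply, map_mul, map_pow, hc1, one_pow,
        mul_one, ← PowerSeries.coeff_zero_eq_constantCoeff_apply]
      exact constantCoeff_expPS
    · have dP7 : derivativeFun (pochhammerPS 7) = G 7 * pochhammerPS 7 :=
        deriv_pochhammer 7 (by omega)
      have dP1 : derivativeFun (pochhammerPS 1) = G 1 * pochhammerPS 1 :=
        deriv_pochhammer 1 le_rfl
      have dE : derivativeFun (expPS (Ee e)) = derivativeFun (Ee e) * expPS (Ee e) :=
        deriv_expPS hE0
      have dP7p : derivativeFun (pochhammerPS 7 ^ 7)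
          = PowerSeries.C 7 * (pochhammerPS 7 ^ 6 * (G 7 * pochhammerPS 7)) := by
        have h := derivativeFun_pow (pochhammerPS 7) 6
        norm_num at h
        rw [h, dP7]
      have dP1p : derivativeFun (pochhammerPS 1 ^ 8)
          = PowerSeries.C 8 * (pochhammerPS 1 ^ 7 * (G 1 * pochhammerPS 1)) := by
        have h := derivativeFun_pow (pochhammerPS 1) 7
        norm_num at h
        rw [h, dP1]
      rw [derivativeFun_mul, smul_eq_mul, smul_eq_mul, dP1p, dE, deriv_Ee e he, dP7p]
      ring
  have hc18 : PowerSeries.constantCoeff (pochhammerPS 1 ^ 8) ≠ 0 := by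
    rw [map_pow, hc1]; norm_num
  have hinv : pochhammerPS 1 ^ 8 * (pochhammerPS 1 ^ 8)⁻¹ = 1 :=
    PowerSeries.mul_inv_cancel _ hc18
  have hmk : (PowerSeries.mk fun n => if n = 0 then 0 else
      bellComplete (fun m => (Nat.factorial m : ℚ) * e m) (n - 1) /
        (Nat.factorial (n - 1) : ℚ)) = PowerSeries.X * expPS (Ee e) := by
    have hEe : (PowerSeries.mk fun m => if m = 0 then 0 else
        ((Nat.factorial m : ℚ) * e m) / (Nat.factorial m : ℚ)) = Ee e := by
      ext j
      rw [coeff_mk, Ee, coeff_mk]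
      split_ifs with h
      · rfl
      · rw [mul_comm, mul_div_assoc,
          div_self (by exact_mod_cast (Nat.factorial_ne_zero j)), mul_one]
    ext j
    rw [coeff_mk]
    cases j with
    | zero =>
      rw [if_pos rfl, PowerSeries.coeff_zero_eq_constantCoeff_apply, map_mul,
        PowerSeries.constantCoeff_X, zero_mul]
    | succ k =>
      rw [if_neg (by omega : ¬ (k + 1 = 0)), PowerSeries.coeff_succ_X_mul]
      simp only [bellComplete, Nat.add_sub_cancel]
      rw [hEe, mul_comm, mul_div_assoc,
        div_self (by exact_mod_cast (Nat.factorial_ne_zero k)), mul_one]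
  rw [hmk, hmain]
  rw [show (49 : PowerSeries ℚ) * PowerSeries.X * (expPS (Ee e) * pochhammerPS 1 ^ 8)
      = 49 * (PowerSeries.X * expPS (Ee e)) * pochhammerPS 1 ^ 8 from by ring,
    mul_assoc, hinv, mul_one]
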